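/- arXiv:1906.09744 — 3 statements merged into one kernel-verified Lean document; each statement's English description precedes it below -/
import Mathlib

section
/- Let m ≥ 2 and let d_1, …, d_m be real numbers. For β > 0 define the Gibbs distribution q_j(β) = exp(−β·d_j) / Σ_{k=1}^{m} exp(−β·d_k), and let H(β) = −Σ_{j=1}^{m} q_j(β) · ln q_j(β) be its Shannon entropy (natural logarithm). Then H is differentiable on (0,∞) and its derivative satisfies H'(β) = −β · Var_{q(β)}(d), where Var_{q(β)}(d) = Σ_{j=1}^{m} q_j(β)·d_j² − (Σ_{j=1}^{m} q_j(β)·d_j)². In particular H'(β) ≤ 0 for all β > 0, and H'(β) < 0 whenever the d_j are not all equal. -/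
open Real

/-- For the Gibbs distribution
`q_j(β) = exp(−β d_j) / Σ_k exp(−β d_k)` on `m ≥ 2` outcomes, the Shannon
entropy `H(β) = −Σ_j q_j(β) ln q_j(β)` is differentiable on `(0,∞)` with
`H'(β) = −β · Var_{q(β)}(d)`, where
`Var_{q(β)}(d) = Σ_j q_j(β) d_j² − (Σ_j q_j(β) d_j)²`.  In particular
`H'(β) ≤ 0` for all `β > 0`, and `H'(β) < 0` whenever the `d_j` are not all
equal. -/
theorem gibbs_entropy_deriv
    (m : ℕ) (hm : 2 ≤ m) (d : Fin m → ℝ)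
    (q : ℝ → Fin m → ℝ)
    (hq : ∀ β j, q β j = Real.exp (-β * d j) / ∑ k : Fin m, Real.exp (-β * d k))
    (H : ℝ → ℝ)
    (hH : ∀ β, H β = -∑ j : Fin m, q β j * Real.log (q β j))
    (Var : ℝ → ℝ)
    (hVar : ∀ β, Var β =
      (∑ j : Fin m, q β j * (d j) ^ 2) - (∑ j : Fin m, q β j * d j) ^ 2) :
    (∀ β : ℝ, 0 < β → HasDerivAt H (-β * Var β) β) ∧
    (∀ β : ℝ, 0 < β → -β * Var β ≤ 0) ∧
    (∀ β : ℝ, 0 < β → (¬ ∀ j k : Fin m, d j = d k) → -β * Var β < 0) := by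
  have hne : Nonempty (Fin m) := ⟨⟨0, by omega⟩⟩
  set Z : ℝ → ℝ := fun β => ∑ k : Fin m, Real.exp (-β * d k) with hZdef
  set S1 : ℝ → ℝ := fun β => ∑ k : Fin m, d k * Real.exp (-β * d k) with hS1def
  set S2 : ℝ → ℝ := fun β => ∑ k : Fin m, d k ^ 2 * Real.exp (-β * d k) with hS2def
  have hZpos : ∀ β, 0 < Z β := fun β =>
    Finset.sum_pos (fun k _ => Real.exp_pos _) Finset.univ_nonempty
  have hqpos : ∀ β j, 0 < q β j := by
    intro β j
    rw [hq β j]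
    exact div_pos (Real.exp_pos _) (hZpos β)
  have hsum : ∀ β, ∑ j : Fin m, q β j = 1 := by
    intro β
    have : ∑ j : Fin m, q β j = (∑ j : Fin m, Real.exp (-β * d j)) / Z β := by
      rw [Finset.sum_div]
      exact Finset.sum_congr rfl fun j _ => hq β j
    rw [this]
    exact div_self (ne_of_gt (hZpos β))
  -- derivatives of Z and S1
  have hexp : ∀ (k : Fin m) (β : ℝ),
      HasDerivAt (fun x : ℝ => Real.exp (-x * d k)) (-d k * Real.exp (-β * d k)) β := by
    intro k β
    have h1 : HasDerivAt (fun x : ℝ => -x * d k) (-d k) β := by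
      simpa using ((hasDerivAt_id β).neg.mul_const (d k))
    simpa [mul_comm] using h1.exp
  have hZd : ∀ β, HasDerivAt Z (-(S1 β)) β := by
    intro β
    have := HasDerivAt.fun_sum (fun k (_ : k ∈ Finset.univ) => hexp k β)
    simpa [hZdef, hS1def, Finset.sum_neg_distrib, neg_mul] using this
  have hS1d : ∀ β, HasDerivAt S1 (-(S2 β)) β := by
    intro β
    have h : ∀ k : Fin m, HasDerivAt (fun x : ℝ => d k * Real.exp (-x * d k))
        (d k * (-d k * Real.exp (-β * d k))) β := fun k => (hexp k β).const_mul (d k)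
    have := HasDerivAt.fun_sum (fun k (_ : k ∈ Finset.univ) => h k)
    have heq : ∑ k : Fin m, d k * (-d k * Real.exp (-β * d k)) = -(S2 β) := by
      rw [hS2def]
      simp only [← Finset.sum_neg_distrib]
      exact Finset.sum_congr rfl fun k _ => by ring
    rwa [heq] at this
  -- express H via Z and S1
  have hHeq : ∀ β, H β = β * (S1 β / Z β) + Real.log (Z β) := by
    intro β
    rw [hH β]
    have hlogq : ∀ j, Real.log (q β j) = -β * d j - Real.log (Z β) := by
      intro j
      rw [hq β j, Real.log_div (ne_of_gt (Real.exp_pos _)) (ne_of_gt (hZpos β)),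
        Real.log_exp]
    have : ∑ j : Fin m, q β j * Real.log (q β j)
        = ∑ j : Fin m, (-β * (q β j * d j) - Real.log (Z β) * q β j) := by
      refine Finset.sum_congr rfl fun j _ => ?_
      rw [hlogq j]; ring
    rw [this, Finset.sum_sub_distrib, ← Finset.mul_sum, ← Finset.mul_sum, hsum β]
    have hS1q : ∑ j : Fin m, q β j * d j = S1 β / Z β := by
      rw [hS1def, Finset.sum_div]
      refine Finset.sum_congr rfl fun j _ => ?_
      rw [hq β j]; ring
    rw [hS1q]; ring
  have hVar' : ∀ β, Var β = S2 β / Z β - (S1 β / Z β) ^ 2 := by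
    intro β
    rw [hVar β]
    have h1 : ∑ j : Fin m, q β j * d j ^ 2 = S2 β / Z β := by
      rw [hS2def, Finset.sum_div]
      refine Finset.sum_congr rfl fun j _ => ?_
      rw [hq β j]; ring
    have h2 : ∑ j : Fin m, q β j * d j = S1 β / Z β := by
      rw [hS1def, Finset.sum_div]
      refine Finset.sum_congr rfl fun j _ => ?_
      rw [hq β j]; ring
    rw [h1, h2]
  -- variance as sum of squares
  have hVarsq : ∀ β, Var β = ∑ j : Fin m, q β j * (d j - ∑ k : Fin m, q β k * d k) ^ 2 := by
    intro β
    rw [hVar β]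
    set μ := ∑ k : Fin m, q β k * d k with hμ
    have : ∑ j : Fin m, q β j * (d j - μ) ^ 2
        = ∑ j : Fin m, (q β j * d j ^ 2 - 2 * μ * (q β j * d j) + μ ^ 2 * q β j) := by
      refine Finset.sum_congr rfl fun j _ => ?_; ring
    rw [this, Finset.sum_add_distrib, Finset.sum_sub_distrib, ← Finset.mul_sum,
      ← Finset.mul_sum, hsum β, ← hμ]
    ring
  have hVarnn : ∀ β, 0 ≤ Var β := by
    intro β
    rw [hVarsq β]
    exact Finset.sum_nonneg fun j _ => mul_nonneg (le_of_lt (hqpos β j)) (sq_nonneg _)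
  refine ⟨?_, ?_, ?_⟩
  · intro β hβ
    have hZne : Z β ≠ 0 := ne_of_gt (hZpos β)
    have hdiv : HasDerivAt (fun x => S1 x / Z x)
        ((-(S2 β) * Z β - S1 β * -(S1 β)) / Z β ^ 2) β := (hS1d β).div (hZd β) hZne
    have hmul : HasDerivAt (fun x => x * (S1 x / Z x))
        (1 * (S1 β / Z β) + β * ((-(S2 β) * Z β - S1 β * -(S1 β)) / Z β ^ 2)) β :=
      (hasDerivAt_id β).mul hdiv
    have hlog : HasDerivAt (fun x => Real.log (Z x)) (-(S1 β) / Z β) β :=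
      (hZd β).log hZne
    have htot := hmul.add hlog
    have hG : HasDerivAt (fun x => x * (S1 x / Z x) + Real.log (Z x)) (-β * Var β) β := by
      refine htot.congr_deriv ?_
      rw [hVar' β]
      field_simp
      ring
    exact hG.congr_of_eventuallyEq (Filter.Eventually.of_forall fun x => hHeq x)
  · intro β hβ
    have := hVarnn β
    nlinarith
  · intro β hβ hne'
    push_neg at hne'
    obtain ⟨j, k, hjk⟩ := hne'
    set μ := ∑ i : Fin m, q β i * d i with hμ
    have hVpos : 0 < Var β := by
      rw [hVarsq β]
      have hex : ∃ i : Fin m, d i ≠ μ := by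
        by_contra hc
        push_neg at hc
        exact hjk ((hc j).trans (hc k).symm)
      obtain ⟨i, hi⟩ := hex
      refine Finset.sum_pos' (fun l _ => mul_nonneg (le_of_lt (hqpos β l)) (sq_nonneg _))
        ⟨i, Finset.mem_univ i, ?_⟩
      exact mul_pos (hqpos β i) (by have := sub_ne_zero.mpr hi; positivity)
    nlinarith
end

section
/- Let m ≥ 2 and let d_1, …, d_m be real numbers that are not all equal. For σ > 0 define p_j(σ) = exp(−d_j/(2σ²)) / Σ_{k=1}^{m} exp(−d_k/(2σ²)) and the Shannon entropy H(σ) = −Σ_{j=1}^{m} p_j(σ) · log₂ p_j(σ). Then H is strictly monotonically increasing on (0, ∞); consequently, the perplexity Perp(σ) = 2^{H(σ)} is also strictly monotonically increasing in the bandwidth σ. -/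
open Real

lemma var_lemma {m : ℕ} (d w : Fin m → ℝ) (hw : ∀ j, 0 < w j)
    (j0 k0 : Fin m) (hjk : d j0 ≠ d k0) :
    (∑ j, d j * w j) ^ 2 < (∑ j, (d j) ^ 2 * w j) * (∑ j, w j) := by
  have hAB : (∑ j, (d j)^2 * w j) * (∑ j : Fin m, w j) = ∑ j, ∑ k, (d j)^2 * w j * w k :=
    Finset.sum_mul_sum _ _ _ _
  have hBA : (∑ j : Fin m, w j) * (∑ j, (d j)^2 * w j) = ∑ j, ∑ k, w j * ((d k)^2 * w k) :=
    Finset.sum_mul_sum _ _ _ _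
  have hC : (∑ j, d j * w j) * (∑ j, d j * w j) = ∑ j, ∑ k, (d j * w j) * (d k * w k) :=
    Finset.sum_mul_sum _ _ _ _
  have key : 2 * ((∑ j, (d j)^2 * w j) * (∑ j, w j) - (∑ j, d j * w j)^2) =
      ∑ j, ∑ k, w j * w k * (d j - d k)^2 := by
    calc 2 * ((∑ j, (d j)^2 * w j) * (∑ j, w j) - (∑ j, d j * w j)^2)
        = ((∑ j, (d j)^2 * w j) * (∑ j, w j)) + ((∑ j : Fin m, w j) * (∑ j, (d j)^2 * w j))
          - 2 * ((∑ j, d j * w j) * (∑ j, d j * w j)) := by ring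
      _ = (∑ j, ∑ k, (d j)^2 * w j * w k) + (∑ j, ∑ k, w j * ((d k)^2 * w k))
          - 2 * (∑ j, ∑ k, (d j * w j) * (d k * w k)) := by rw [hAB, hBA, hC]
      _ = ∑ j, ∑ k, w j * w k * (d j - d k)^2 := by
          simp only [Finset.mul_sum, ← Finset.sum_add_distrib, ← Finset.sum_sub_distrib]
          exact Finset.sum_congr rfl fun j _ => Finset.sum_congr rfl fun k _ => by ring
  have hpos : 0 < ∑ j, ∑ k, w j * w k * (d j - d k)^2 := by
    have hnn : ∀ j k : Fin m, 0 ≤ w j * w k * (d j - d k)^2 := fun j k =>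
      mul_nonneg (mul_nonneg (hw j).le (hw k).le) (sq_nonneg _)
    apply Finset.sum_pos' (fun j _ => Finset.sum_nonneg fun k _ => hnn j k)
    refine ⟨j0, Finset.mem_univ _, Finset.sum_pos' (fun k _ => hnn j0 k) ⟨k0, Finset.mem_univ _, ?_⟩⟩
    have h2 : (0:ℝ) < (d j0 - d k0)^2 := by
      have := sub_ne_zero.mpr hjk
      positivity
    exact mul_pos (mul_pos (hw j0) (hw k0)) h2
  nlinarith [key, hpos]


lemma S_strictAnti {m : ℕ} [Nonempty (Fin m)] (d : Fin m → ℝ)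
    (j0 k0 : Fin m) (hjk : d j0 ≠ d k0) :
    StrictAntiOn (fun b : ℝ =>
      b * (∑ j, d j * Real.exp (-(b * d j))) / (∑ j, Real.exp (-(b * d j)))
        + Real.log (∑ j, Real.exp (-(b * d j)))) (Set.Ioi 0) := by
  set Z : ℝ → ℝ := fun b => ∑ j, Real.exp (-(b * d j)) with hZdef
  set Z1 : ℝ → ℝ := fun b => ∑ j, d j * Real.exp (-(b * d j)) with hZ1def
  set Z2 : ℝ → ℝ := fun b => ∑ j, (d j)^2 * Real.exp (-(b * d j)) with hZ2def
  have hZpos : ∀ b, 0 < Z b := fun b =>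
    Finset.sum_pos (fun j _ => Real.exp_pos _) Finset.univ_nonempty
  have hZne : ∀ b, Z b ≠ 0 := fun b => (hZpos b).ne'
  have hterm : ∀ (j : Fin m) (b : ℝ),
      HasDerivAt (fun b : ℝ => Real.exp (-(b * d j)))
        (Real.exp (-(b * d j)) * (-(d j))) b := by
    intro j b
    exact ((hasDerivAt_mul_const (d j)).neg).exp
  have hZderiv : ∀ b, HasDerivAt Z (-(Z1 b)) b := by
    intro b
    have := HasDerivAt.fun_sum (fun j (_ : j ∈ Finset.univ) => hterm j b)
    refine this.congr_deriv (Eq.symm ?_)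
    simp [hZ1def, Finset.sum_neg_distrib]
    exact Finset.sum_congr rfl fun j _ => by ring
  have hZ1deriv : ∀ b, HasDerivAt Z1 (-(Z2 b)) b := by
    intro b
    have := HasDerivAt.fun_sum (fun j (_ : j ∈ Finset.univ) => (hterm j b).const_mul (d j))
    refine this.congr_deriv (Eq.symm ?_)
    simp [hZ2def, Finset.sum_neg_distrib]
    exact Finset.sum_congr rfl fun j _ => by ring
  have hSderiv : ∀ b : ℝ, HasDerivAt (fun b => b * Z1 b / Z b + Real.log (Z b))
      (((1 * Z1 b + b * (-(Z2 b))) * Z b - b * Z1 b * (-(Z1 b))) / (Z b)^2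
        + (-(Z1 b)) / Z b) b := by
    intro b
    exact (((hasDerivAt_id b).mul (hZ1deriv b)).div (hZderiv b) (hZne b)).add
      ((hZderiv b).log (hZne b))
  have hval : ∀ b : ℝ, 0 < b →
      ((1 * Z1 b + b * (-(Z2 b))) * Z b - b * Z1 b * (-(Z1 b))) / (Z b)^2
        + (-(Z1 b)) / Z b < 0 := by
    intro b hb
    have hvar : (Z1 b)^2 < Z2 b * Z b := by
      have := var_lemma d (fun j => Real.exp (-(b * d j))) (fun j => Real.exp_pos _) j0 k0 hjk
      simpa [hZdef, hZ1def, hZ2def] using this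
    have heq : ((1 * Z1 b + b * (-(Z2 b))) * Z b - b * Z1 b * (-(Z1 b))) / (Z b)^2
        + (-(Z1 b)) / Z b = -(b * (Z2 b * Z b - (Z1 b)^2)) / (Z b)^2 := by
      field_simp
      ring
    rw [heq]
    apply div_neg_of_neg_of_pos
    · simp only [neg_neg, neg_lt_zero]
      exact mul_pos hb (by linarith)
    · exact pow_pos (hZpos b) 2
  apply strictAntiOn_of_deriv_neg (convex_Ioi 0)
  · exact fun b _ => ((hSderiv b).differentiableAt.continuousAt).continuousWithinAt
  · intro b hb
    rw [interior_Ioi] at hb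
    rw [(hSderiv b).deriv]
    exact hval b hb

/-- With `p_j(σ) = exp(−d_j/(2σ²)) / Σ_k exp(−d_k/(2σ²))` for
`m ≥ 2` squared distances `d_1, …, d_m` that are not all equal, the Shannon
entropy `H(σ) = −Σ_j p_j(σ) log₂ p_j(σ)` is strictly monotonically increasing
on `(0, ∞)`, and consequently so is the perplexity `Perp(σ) = 2^{H(σ)}`. -/
theorem entropy_perplexity_strictMono_in_bandwidth
    (m : ℕ) (hm : 2 ≤ m) (d : Fin m → ℝ)
    (hd : ¬ ∀ j k : Fin m, d j = d k)
    (p : ℝ → Fin m → ℝ)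
    (hp : ∀ σ j, p σ j =
      Real.exp (-d j / (2 * σ ^ 2)) / ∑ k : Fin m, Real.exp (-d k / (2 * σ ^ 2)))
    (H : ℝ → ℝ)
    (hH : ∀ σ, H σ = -∑ j : Fin m, p σ j * Real.logb 2 (p σ j))
    (Perp : ℝ → ℝ)
    (hPerp : ∀ σ, Perp σ = (2 : ℝ) ^ (H σ)) :
    StrictMonoOn H (Set.Ioi (0 : ℝ)) ∧ StrictMonoOn Perp (Set.Ioi (0 : ℝ)) := by
  push_neg at hd
  obtain ⟨j0, k0, hjk⟩ := hd
  haveI : Nonempty (Fin m) := Fin.pos_iff_nonempty.mp (by omega)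
  set S : ℝ → ℝ := fun b =>
      b * (∑ j, d j * Real.exp (-(b * d j))) / (∑ j, Real.exp (-(b * d j)))
        + Real.log (∑ j, Real.exp (-(b * d j))) with hSdef
  have hanti : StrictAntiOn S (Set.Ioi 0) := S_strictAnti d j0 k0 hjk
  have hlog2 : (0:ℝ) < Real.log 2 := Real.log_pos one_lt_two
  have hkey : ∀ σ : ℝ, 0 < σ → H σ = S (1 / (2 * σ ^ 2)) / Real.log 2 := by
    intro σ hσ
    set b := 1 / (2 * σ ^ 2) with hb
    have hσ2 : (2 * σ ^ 2) ≠ 0 := by positivity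
    have harg : ∀ j : Fin m, -d j / (2 * σ ^ 2) = -(b * d j) := by
      intro j; rw [hb]; field_simp
    rw [hH]
    simp only [hp, harg, hSdef]
    set Z := ∑ k : Fin m, Real.exp (-(b * d k)) with hZ
    have hZpos : 0 < Z := Finset.sum_pos (fun _ _ => Real.exp_pos _) Finset.univ_nonempty
    have hZne : Z ≠ 0 := hZpos.ne'
    have hterm : ∀ j : Fin m,
        (Real.exp (-(b * d j)) / Z) * Real.logb 2 (Real.exp (-(b * d j)) / Z)
        = ((-(b * (d j * Real.exp (-(b * d j)))) - Real.log Z * Real.exp (-(b * d j))) / Z)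
            / Real.log 2 := by
      intro j
      rw [Real.logb, Real.log_div (Real.exp_ne_zero _) hZne, Real.log_exp]
      field_simp
    rw [Finset.sum_congr rfl (fun j _ => hterm j)]
    rw [← Finset.sum_div, ← Finset.sum_div, Finset.sum_sub_distrib, ← Finset.mul_sum]
    have hs1 : ∑ x : Fin m, -(b * (d x * Real.exp (-(b * d x))))
        = -(b * ∑ x : Fin m, d x * Real.exp (-(b * d x))) := by
      rw [Finset.sum_neg_distrib, ← Finset.mul_sum]
    rw [hs1]
    field_simp
    ring
  have hHmono : StrictMonoOn H (Set.Ioi (0 : ℝ)) := by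
    intro σ1 h1 σ2 h2 h12
    rw [Set.mem_Ioi] at h1 h2
    have hb1pos : (0:ℝ) < 1 / (2 * σ1 ^ 2) := by positivity
    have hb2pos : (0:ℝ) < 1 / (2 * σ2 ^ 2) := by positivity
    have hblt : 1 / (2 * σ2 ^ 2) < 1 / (2 * σ1 ^ 2) := by
      apply one_div_lt_one_div_of_lt (by positivity)
      have : σ1 ^ 2 < σ2 ^ 2 := by nlinarith
      linarith
    have hS : S (1 / (2 * σ1 ^ 2)) < S (1 / (2 * σ2 ^ 2)) :=
      hanti (Set.mem_Ioi.mpr hb2pos) (Set.mem_Ioi.mpr hb1pos) hblt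
    rw [hkey σ1 h1, hkey σ2 h2]
    exact (div_lt_div_iff_of_pos_right hlog2).mpr hS
  refine ⟨hHmono, ?_⟩
  intro σ1 h1 σ2 h2 h12
  rw [hPerp, hPerp]
  exact (Real.rpow_lt_rpow_left_iff one_lt_two).mpr (hHmono h1 h2 h12)
end

section
/- Let m ≥ 2 and let d_1, …, d_m be real numbers such that there is an index j₀ with d_{j₀} < d_j for all j ≠ j₀ (a unique strict minimum). For σ > 0 define p_j(σ) = exp(−d_j/(2σ²)) / Σ_{k=1}^{m} exp(−d_k/(2σ²)), H(σ) = −Σ_{j=1}^{m} p_j(σ) · log₂ p_j(σ), and Perp(σ) = 2^{H(σ)}. Then for every target perplexity value p with 1 < p < m there exists a unique σ > 0 such that Perp(σ) = p. (Equivalently, the binary search for the bandwidth σ_i achieving a user-specified perplexity in t-SNE has a unique solution.) -/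
open Real Finset

namespace PerpAux

variable {m : ℕ}

noncomputable def Z (e : Fin m → ℝ) (t : ℝ) : ℝ := ∑ k : Fin m, Real.exp (-(e k) * t)
noncomputable def A (e : Fin m → ℝ) (t : ℝ) : ℝ := ∑ k : Fin m, e k * Real.exp (-(e k) * t)
noncomputable def B (e : Fin m → ℝ) (t : ℝ) : ℝ := ∑ k : Fin m, (e k)^2 * Real.exp (-(e k) * t)
noncomputable def F (e : Fin m → ℝ) (t : ℝ) : ℝ := t * A e t / Z e t + Real.log (Z e t)

lemma Zpos (e : Fin m → ℝ) (hm : 0 < m) (t : ℝ) : 0 < Z e t := by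
  have : Nonempty (Fin m) := ⟨⟨0, hm⟩⟩
  exact Finset.sum_pos (fun k _ => Real.exp_pos _) Finset.univ_nonempty

lemma hasDerivExp (c t : ℝ) : HasDerivAt (fun s => Real.exp (-c * s)) (-c * Real.exp (-c * t)) t := by
  have := ((hasDerivAt_id t).const_mul (-c)).exp
  convert this using 1 <;> simp <;> ring

lemma hasDerivZ (e : Fin m → ℝ) (t : ℝ) : HasDerivAt (Z e) (-(A e t)) t := by
  have : HasDerivAt (Z e) (∑ k : Fin m, -(e k) * Real.exp (-(e k) * t)) t :=
    HasDerivAt.fun_sum (fun k _ => hasDerivExp (e k) t)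
  convert this using 1
  rw [A, ← Finset.sum_neg_distrib]
  congr 1; funext k; ring

lemma hasDerivA (e : Fin m → ℝ) (t : ℝ) : HasDerivAt (A e) (-(B e t)) t := by
  have : HasDerivAt (A e) (∑ k : Fin m, e k * (-(e k) * Real.exp (-(e k) * t))) t :=
    HasDerivAt.fun_sum (fun k _ => (hasDerivExp (e k) t).const_mul (e k))
  convert this using 1
  rw [B, ← Finset.sum_neg_distrib]
  congr 1; funext k; ring

lemma hasDerivF (e : Fin m → ℝ) (hm : 0 < m) (t : ℝ) :
    HasDerivAt (F e) (-(t * (B e t * Z e t - (A e t)^2)) / (Z e t)^2) t := by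
  have hZ := Zpos e hm t
  have h1 : HasDerivAt (fun s => s * A e s) (1 * A e t + t * -(B e t)) t := by
    have := (hasDerivAt_id t).mul (hasDerivA e t)
    exact this
  have h2 := h1.div (hasDerivZ e t) (ne_of_gt hZ)
  have h3 := (hasDerivZ e t).log (ne_of_gt hZ)
  have h4 := h2.add h3
  refine h4.congr_deriv ?_
  field_simp
  ring


lemma var_identity (e w : Fin m → ℝ) :
    2 * ((∑ k : Fin m, (e k)^2 * w k) * (∑ k : Fin m, w k) - (∑ k : Fin m, e k * w k)^2)
      = ∑ j : Fin m, ∑ k : Fin m, w j * w k * (e j - e k)^2 := by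
  have h : ∀ j k : Fin m, w j * w k * (e j - e k)^2
      = (e j^2 * w j) * w k - (2 * (e j * w j)) * (e k * w k) + w j * ((e k)^2 * w k) := by
    intro j k; ring
  simp_rw [h, Finset.sum_add_distrib, Finset.sum_sub_distrib, ← Finset.mul_sum,
    ← Finset.sum_mul]
  rw [show ∑ i : Fin m, 2 * (e i * w i) = 2 * ∑ i : Fin m, e i * w i from
    (Finset.mul_sum _ _ _).symm]
  ring

lemma var_pos (e : Fin m → ℝ) (j₀ j₁ : Fin m) (hne : j₀ ≠ j₁) (hve : e j₀ ≠ e j₁)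
    (t : ℝ) : 0 < B e t * Z e t - (A e t)^2 := by
  set w : Fin m → ℝ := fun k => Real.exp (-(e k) * t) with hw
  have hwpos : ∀ k, 0 < w k := fun k => Real.exp_pos _
  have key := var_identity e w
  have hterm : 0 < w j₀ * w j₁ * (e j₀ - e j₁)^2 := by
    exact mul_pos (mul_pos (hwpos j₀) (hwpos j₁))
      (pow_two_pos_of_ne_zero (sub_ne_zero.mpr hve))
  have hsum : w j₀ * w j₁ * (e j₀ - e j₁)^2 ≤ ∑ j : Fin m, ∑ k : Fin m, w j * w k * (e j - e k)^2 := by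
    calc w j₀ * w j₁ * (e j₀ - e j₁)^2
        ≤ ∑ k : Fin m, w j₀ * w k * (e j₀ - e k)^2 := by
          apply Finset.single_le_sum (f := fun k => w j₀ * w k * (e j₀ - e k)^2)
            (fun k _ => by positivity) (Finset.mem_univ j₁)
      _ ≤ ∑ j : Fin m, ∑ k : Fin m, w j * w k * (e j - e k)^2 := by
          apply Finset.single_le_sum (f := fun j => ∑ k : Fin m, w j * w k * (e j - e k)^2)
            (fun j _ => Finset.sum_nonneg (fun k _ => by positivity)) (Finset.mem_univ j₀)
  have h2 : 0 < 2 * (B e t * Z e t - (A e t)^2) := by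
    rw [B, Z, A, key]; exact lt_of_lt_of_le hterm hsum
  linarith

lemma continuousF (e : Fin m → ℝ) (hm : 0 < m) : Continuous (F e) :=
  continuous_iff_continuousAt.2 fun t => (hasDerivF e hm t).differentiableAt.continuousAt

lemma strictAntiF (e : Fin m → ℝ) (hm : 0 < m) (j₀ j₁ : Fin m) (hne : j₀ ≠ j₁)
    (hve : e j₀ ≠ e j₁) : StrictAntiOn (F e) (Set.Ici 0) := by
  apply strictAntiOn_of_deriv_neg (convex_Ici 0) (continuousF e hm).continuousOn
  intro t ht
  rw [interior_Ici] at ht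
  rw [(hasDerivF e hm t).deriv]
  have h1 := var_pos e j₀ j₁ hne hve t
  have hZ := Zpos e hm t
  have : 0 < t * (B e t * Z e t - (A e t)^2) := mul_pos ht h1
  have hZ2 : 0 < (Z e t)^2 := by positivity
  exact div_neg_of_neg_of_pos (neg_neg_of_pos this) hZ2

lemma F_zero (e : Fin m → ℝ) : F e 0 = Real.log m := by
  simp [F, Z]


open Filter Topology

lemma tendsto_Z (e : Fin m → ℝ) (j₀ : Fin m) (h0 : e j₀ = 0)
    (hpos : ∀ j, j ≠ j₀ → 0 < e j) :
    Tendsto (Z e) atTop (𝓝 1) := by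
  have : Tendsto (Z e) atTop (𝓝 (∑ k : Fin m, if k = j₀ then 1 else 0)) := by
    apply tendsto_finset_sum
    intro k _
    by_cases hk : k = j₀
    · subst hk
      simp [h0]
    · simp only [hk, if_neg hk]
      have hc := hpos k hk
      have : Tendsto (fun t : ℝ => -(e k) * t) atTop atBot :=
        tendsto_id.const_mul_atTop_of_neg (neg_neg_of_pos hc)
      exact Real.tendsto_exp_atBot.comp this
  simpa using this

lemma tendsto_tA (e : Fin m → ℝ) (j₀ : Fin m) (h0 : e j₀ = 0)
    (hpos : ∀ j, j ≠ j₀ → 0 < e j) :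
    Tendsto (fun t => t * A e t) atTop (𝓝 0) := by
  have heq : ∀ t : ℝ, t * A e t = ∑ k : Fin m, t * (e k * Real.exp (-(e k) * t)) := by
    intro t; rw [A, Finset.mul_sum]
  simp_rw [heq]
  have : Tendsto (fun t => ∑ k : Fin m, t * (e k * Real.exp (-(e k) * t))) atTop
      (𝓝 (∑ k : Fin m, (0:ℝ))) := by
    apply tendsto_finset_sum
    intro k _
    by_cases hk : k = j₀
    · subst hk
      simp [h0]
    · have hc := hpos k hk
      have h1 : Tendsto (fun x : ℝ => x * Real.exp (-x)) atTop (𝓝 0) := by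
        simpa using Real.tendsto_pow_mul_exp_neg_atTop_nhds_zero 1
      have h2 : Tendsto (fun t : ℝ => e k * t) atTop atTop :=
        tendsto_id.const_mul_atTop hc
      have h3 : Tendsto (fun t : ℝ => (e k * t) * Real.exp (-(e k * t))) atTop (𝓝 0) :=
        h1.comp h2
      have heq2 : (fun t : ℝ => t * (e k * Real.exp (-(e k) * t)))
          = fun t => e k * t * Real.exp (-(e k * t)) := by
        funext t
        rw [neg_mul]
        ring
      rw [heq2]
      exact h3
  simpa using this

lemma tendsto_F (e : Fin m → ℝ) (hm : 0 < m) (j₀ : Fin m) (h0 : e j₀ = 0)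
    (hpos : ∀ j, j ≠ j₀ → 0 < e j) :
    Tendsto (F e) atTop (𝓝 0) := by
  have hZ := tendsto_Z e j₀ h0 hpos
  have htA := tendsto_tA e j₀ h0 hpos
  have h1 : Tendsto (fun t => t * A e t / Z e t) atTop (𝓝 (0 / 1)) :=
    htA.div hZ one_ne_zero
  have h2 : Tendsto (fun t => Real.log (Z e t)) atTop (𝓝 (Real.log 1)) :=
    (Real.continuousAt_log one_ne_zero).tendsto.comp hZ
  have := h1.add h2
  simp at this; exact this


lemma exists_unique_t (e : Fin m → ℝ) (hm2 : 2 ≤ m) (j₀ : Fin m) (h0 : e j₀ = 0)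
    (hpos : ∀ j, j ≠ j₀ → 0 < e j) (y : ℝ) (hy0 : 0 < y) (hym : y < Real.log m) :
    ∃! t : ℝ, 0 < t ∧ F e t = y := by
  have hm0 : 0 < m := by omega
  have : Nontrivial (Fin m) := Fin.nontrivial_iff_two_le.mpr hm2
  obtain ⟨j₁, hj₁⟩ := exists_ne j₀
  have hve : e j₀ ≠ e j₁ := by
    rw [h0]; exact (hpos j₁ hj₁).ne
  have hanti := strictAntiF e hm0 j₀ j₁ (Ne.symm hj₁) hve
  -- existence
  have hev : ∀ᶠ T in Filter.atTop, F e T < y ∧ 0 < T :=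
    ((tendsto_F e hm0 j₀ h0 hpos).eventually_lt_const hy0).and (Filter.eventually_gt_atTop 0)
  obtain ⟨T, hFT, hT⟩ := hev.exists
  have hsub := intermediate_value_Icc' (le_of_lt hT) (continuousF e hm0).continuousOn
  have hy : y ∈ Set.Icc (F e T) (F e 0) := by
    constructor
    · exact le_of_lt hFT
    · rw [F_zero]; exact le_of_lt hym
  obtain ⟨t, ht, hFt⟩ := hsub hy
  have ht0 : 0 < t := by
    rcases lt_or_eq_of_le ht.1 with h | h
    · exact h
    · exfalso; rw [← h] at hFt; rw [F_zero] at hFt; rw [hFt] at hym; exact lt_irrefl _ hym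
  refine ⟨t, ⟨ht0, hFt⟩, ?_⟩
  intro t' ⟨ht'0, hFt'⟩
  exact hanti.injOn (le_of_lt ht'0) (le_of_lt ht0) (hFt'.trans hFt.symm)

end PerpAux

open Filter Topology PerpAux

/-- With `p_j(σ) = exp(−d_j/(2σ²)) / Σ_k exp(−d_k/(2σ²))` for
`m ≥ 2` squared distances having a unique strict minimum,
`H(σ) = −Σ_j p_j(σ) log₂ p_j(σ)` and `Perp(σ) = 2^{H(σ)}`, for every target
perplexity `p` with `1 < p < m` there exists a unique bandwidth `σ > 0` with
`Perp(σ) = p`. -/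
theorem perplexity_binary_search_unique_solution
    (m : ℕ) (hm : 2 ≤ m) (d : Fin m → ℝ)
    (j₀ : Fin m) (hj₀ : ∀ j : Fin m, j ≠ j₀ → d j₀ < d j)
    (p : ℝ → Fin m → ℝ)
    (hp : ∀ σ j, p σ j =
      Real.exp (-d j / (2 * σ ^ 2)) / ∑ k : Fin m, Real.exp (-d k / (2 * σ ^ 2)))
    (H : ℝ → ℝ)
    (hH : ∀ σ, H σ = -∑ j : Fin m, p σ j * Real.logb 2 (p σ j))
    (Perp : ℝ → ℝ)
    (hPerp : ∀ σ, Perp σ = (2 : ℝ) ^ (H σ)) :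
    ∀ perp : ℝ, 1 < perp → perp < m →
      ∃! σ : ℝ, 0 < σ ∧ Perp σ = perp := by
  intro perp h1 hpm
  have hm0 : 0 < m := by omega
  set e : Fin m → ℝ := fun j => d j - d j₀ with he
  have h0 : e j₀ = 0 := sub_self _
  have hepos : ∀ j, j ≠ j₀ → 0 < e j := fun j hj => sub_pos.mpr (hj₀ j hj)
  -- key identity: Perp σ = exp (F e (1/(2σ²))) for σ > 0
  have key : ∀ σ : ℝ, 0 < σ → Perp σ = Real.exp (F e (1 / (2 * σ ^ 2))) := by
    intro σ hσ
    set t : ℝ := 1 / (2 * σ ^ 2) with htdef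
    have h2σ : (2 * σ ^ 2) ≠ 0 := by positivity
    have hZ := Zpos e hm0 t
    have hexpand : ∀ j : Fin m, Real.exp (-d j / (2 * σ ^ 2))
        = Real.exp (-(d j₀) * t) * Real.exp (-(e j) * t) := by
      intro j
      rw [← Real.exp_add]
      congr 1
      rw [show -d j / (2 * σ ^ 2) = -d j * t from by rw [htdef]; ring]
      show -d j * t = -d j₀ * t + -(d j - d j₀) * t
      ring
    have hpσ : ∀ j, p σ j = Real.exp (-(e j) * t) / Z e t := by
      intro j
      rw [hp]
      simp_rw [hexpand, Z, ← Finset.mul_sum]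
      rw [mul_div_mul_left _ _ (Real.exp_ne_zero _)]
    have hlog2 : Real.log 2 ≠ 0 := (Real.log_pos (by norm_num)).ne'
    have hsum : -∑ j : Fin m, p σ j * Real.log (p σ j) = F e t := by
      have hterm : ∀ j : Fin m,
          p σ j * Real.log (p σ j)
            = -t * (e j * Real.exp (-(e j) * t)) / Z e t
              - (Real.exp (-(e j) * t) / Z e t) * Real.log (Z e t) := by
        intro j
        rw [hpσ j, Real.log_div (Real.exp_ne_zero _) hZ.ne', Real.log_exp]
        ring
      simp_rw [hterm]
      rw [Finset.sum_sub_distrib, ← Finset.sum_div, ← Finset.mul_sum, ← Finset.sum_mul,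
        ← Finset.sum_div]
      rw [F, ← A, ← Z, div_self hZ.ne']
      ring
    have hHσ : H σ * Real.log 2 = F e t := by
      rw [hH]
      simp_rw [Real.logb, div_eq_mul_inv]
      rw [← hsum]
      rw [neg_mul, neg_inj]
      rw [Finset.sum_mul]
      congr 1; funext j
      field_simp
    rw [hPerp, Real.rpow_def_of_pos (by norm_num : (0:ℝ) < 2), ← hHσ]
    ring_nf
  -- reduce to the t-problem
  have hy0 : 0 < Real.log perp := Real.log_pos h1
  have hym : Real.log perp < Real.log m := Real.log_lt_log (by linarith) hpm
  obtain ⟨t₀, ⟨ht₀, hFt₀⟩, huniq⟩ := exists_unique_t e hm j₀ h0 hepos (Real.log perp) hy0 hym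
  set σ₀ : ℝ := (Real.sqrt (2 * t₀))⁻¹ with hσ₀def
  have h2t₀ : 0 < 2 * t₀ := by linarith
  have hσ₀ : 0 < σ₀ := inv_pos.mpr (Real.sqrt_pos.mpr h2t₀)
  have hσ₀t : 1 / (2 * σ₀ ^ 2) = t₀ := by
    rw [hσ₀def, inv_pow, Real.sq_sqrt (le_of_lt h2t₀)]
    field_simp
  refine ⟨σ₀, ⟨hσ₀, ?_⟩, ?_⟩
  · rw [key σ₀ hσ₀, hσ₀t, hFt₀, Real.exp_log (by linarith)]
  · rintro σ' ⟨hσ', hPσ'⟩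
    have ht' : 0 < 1 / (2 * σ' ^ 2) := by positivity
    have hF' : F e (1 / (2 * σ' ^ 2)) = Real.log perp := by
      have := key σ' hσ'
      rw [hPσ'] at this
      rw [← Real.log_exp (F e (1 / (2 * σ' ^ 2))), ← this]
    have heqt : 1 / (2 * σ' ^ 2) = t₀ := huniq _ ⟨ht', hF'⟩
    rw [← hσ₀t] at heqt
    have hsq : σ' ^ 2 = σ₀ ^ 2 := by
      rw [div_eq_div_iff (by positivity) (by positivity)] at heqt
      nlinarith [heqt]
    calc σ' = Real.sqrt (σ' ^ 2) := (Real.sqrt_sq hσ'.le).symm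
      _ = Real.sqrt (σ₀ ^ 2) := by rw [hsq]
      _ = σ₀ := Real.sqrt_sq hσ₀.le
end
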